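/- arXiv:2012.08109 — 2 statements merged into one kernel-verified Lean document; each statement's English description precedes it below -/
import Mathlib

section
/- Let n ≥ 2 be an integer and θ ∈ (0,1). Then every cubature formula ν of strength 1 on S^{n-1} satisfies ‖ν‖_θ ≥ 2^{1−θ}, and ‖ν‖_θ = 2^{1−θ} holds if and only if ν = (δ_ξ + δ_{−ξ})/2 for some ξ ∈ S^{n-1}. -/
open MeasureTheory Metric
open scoped ENNReal

noncomputable section

set_option maxHeartbeats 2000000

abbrev Sph (n : ℕ) : Type := Metric.sphere (0 : EuclideanSpace ℝ (Fin n)) 1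

def sphMap {n : ℕ} (U : EuclideanSpace ℝ (Fin n) ≃ₗᵢ[ℝ] EuclideanSpace ℝ (Fin n)) :
    Sph n → Sph n := fun x =>
  ⟨U x, by
    have hx : ‖(x : EuclideanSpace ℝ (Fin n))‖ = 1 := mem_sphere_zero_iff_norm.mp x.2
    simpa [mem_sphere_zero_iff_norm] using hx⟩

lemma sphMap_continuous {n : ℕ}
    (U : EuclideanSpace ℝ (Fin n) ≃ₗᵢ[ℝ] EuclideanSpace ℝ (Fin n)) :
    Continuous (sphMap U) :=
  (U.continuous.comp continuous_subtype_val).subtype_mk _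

def antipode {n : ℕ} : Sph n → Sph n := fun x =>
  ⟨-(x : EuclideanSpace ℝ (Fin n)), by
    have hx : ‖(x : EuclideanSpace ℝ (Fin n))‖ = 1 := mem_sphere_zero_iff_norm.mp x.2
    simpa [mem_sphere_zero_iff_norm] using hx⟩

/-- `σ` is invariant under all orthogonal transformations of `ℝⁿ`. -/
def IsRotationInvariant {n : ℕ} (σ : Measure (Sph n)) : Prop :=
  ∀ U : EuclideanSpace ℝ (Fin n) ≃ₗᵢ[ℝ] EuclideanSpace ℝ (Fin n),
    Measure.map (sphMap U) σ = σ

/-- Evaluation of a polynomial on `ℝⁿ` at a point of the sphere. -/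
def polyEval {n : ℕ} (p : MvPolynomial (Fin n) ℝ) (x : Sph n) : ℝ :=
  MvPolynomial.eval (fun i => (x : EuclideanSpace ℝ (Fin n)) i) p

/-- `ν` is finitely supported. -/
def IsFinSupported {n : ℕ} (ν : Measure (Sph n)) : Prop :=
  ∃ s : Finset (Sph n), ν ((↑s : Set (Sph n))ᶜ) = 0

/-- `ν` is a cubature formula of strength `t` w.r.t. the reference measure `σ`. -/
def IsCubature {n : ℕ} (t : ℕ) (σ ν : Measure (Sph n)) : Prop :=
  IsProbabilityMeasure ν ∧ IsFinSupported ν ∧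
    ∀ p : MvPolynomial (Fin n) ℝ, p.totalDegree ≤ t →
      ∫ x, polyEval p x ∂ν = ∫ x, polyEval p x ∂σ

/-- `‖ν‖_θ = ∑ νᵢ^θ`, the sum of the `θ`-th powers of the point masses of `ν`. -/
def thetaNorm {n : ℕ} (ν : Measure (Sph n)) (θ : ℝ) : ℝ :=
  ∑' u : Sph n, (ν {u}).toReal ^ θ

namespace Stmt15Aux

variable {n : ℕ}

lemma coord_continuous (i : Fin n) :
    Continuous fun x : Sph n => (x : EuclideanSpace ℝ (Fin n)) i :=
  (EuclideanSpace.proj i).continuous.comp continuous_subtype_val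

lemma measure_eq_sum (ν : Measure (Sph n)) {s : Finset (Sph n)}
    (hs : ν ((↑s : Set (Sph n))ᶜ) = 0) :
    ν = ∑ u ∈ s, ν {u} • Measure.dirac u := by
  ext A hA
  have hdiff : ν (A \ ↑s) = 0 :=
    measure_mono_null (fun x hx => hx.2) hs
  have h1 : ν A = ν (A ∩ ↑s) := by
    rw [← measure_inter_add_diff A s.finite_toSet.measurableSet, hdiff, add_zero]
  have h2 : (A ∩ ↑s : Set (Sph n)) = ⋃ u ∈ s, (A ∩ {u}) := by
    ext x
    simp only [Set.mem_iUnion, Set.mem_inter_iff, Set.mem_singleton_iff, Finset.mem_coe]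
    constructor
    · rintro ⟨hxA, hxs⟩; exact ⟨x, hxs, hxA, rfl⟩
    · rintro ⟨u, hus, hxA, rfl⟩; exact ⟨hxA, hus⟩
  have h3 : ν (A ∩ ↑s) = ∑ u ∈ s, ν (A ∩ {u}) := by
    rw [h2]
    exact measure_biUnion_finset
      (fun u _ v _ huv => Set.disjoint_left.2 (by rintro x ⟨_, rfl⟩ ⟨_, h⟩; exact huv h))
      (fun u _ => hA.inter (measurableSet_singleton u))
  have h4 : ∀ u ∈ s, ν (A ∩ {u}) = A.indicator (fun _ => ν {u}) u := by
    intro u _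
    by_cases hu : u ∈ A
    · rw [Set.inter_eq_self_of_subset_right (Set.singleton_subset_iff.2 hu),
        Set.indicator_of_mem hu]
    · have he : A ∩ {u} = ∅ := by
        ext x
        simp only [Set.mem_inter_iff, Set.mem_singleton_iff, Set.mem_empty_iff_false, iff_false,
          not_and]
        rintro hx rfl; exact hu hx
      rw [he, Set.indicator_of_notMem hu, measure_empty]
  rw [h1, h3, Finset.sum_congr rfl h4]
  simp only [Measure.coe_finset_sum, Finset.sum_apply, Measure.smul_apply,
    Measure.dirac_apply' _ hA, smul_eq_mul]
  refine Finset.sum_congr rfl fun u _ => ?_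
  by_cases hu : u ∈ A
  · rw [Set.indicator_of_mem hu, Set.indicator_of_mem hu, Pi.one_apply, mul_one]
  · rw [Set.indicator_of_notMem hu, Set.indicator_of_notMem hu, mul_zero]

lemma integral_eq_sum (ν : Measure (Sph n)) [IsProbabilityMeasure ν]
    {s : Finset (Sph n)} (hs : ν ((↑s : Set (Sph n))ᶜ) = 0)
    (f : Sph n → ℝ) (hf : Continuous f) :
    ∫ x, f x ∂ν = ∑ u ∈ s, (ν {u}).toReal • f u := by
  have hsm : MeasurableSet (↑s : Set (Sph n)) := s.finite_toSet.measurableSet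
  have h1 : ν.restrict (↑s : Set (Sph n))ᶜ = 0 := Measure.restrict_eq_zero.2 hs
  have h2 : ∫ x, f x ∂ν = ∫ x in (↑s : Set (Sph n)), f x ∂ν := by
    conv_lhs => rw [← Measure.restrict_add_restrict_compl (μ := ν) hsm]
    rw [h1, add_zero]
  rw [h2]
  exact integral_finset s (hf.continuousOn.integrableOn_compact s.finite_toSet.isCompact)

lemma sigma_coord (σ : Measure (Sph n)) [IsProbabilityMeasure σ]
    (hσ : IsRotationInvariant σ) (i : Fin n) :
    ∫ x : Sph n, (x : EuclideanSpace ℝ (Fin n)) i ∂σ = 0 := by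
  set f : Sph n → ℝ := fun x => (x : EuclideanSpace ℝ (Fin n)) i with hf
  have hfc : Continuous f := coord_continuous i
  have hmap := hσ (LinearIsometryEquiv.neg ℝ)
  have key : ∫ x, f x ∂σ = ∫ x, f (sphMap (LinearIsometryEquiv.neg ℝ) x) ∂σ := by
    conv_lhs => rw [← hmap]
    exact integral_map (sphMap_continuous _).aemeasurable
      (by rw [hmap]; exact hfc.aestronglyMeasurable)
  have hneg : ∀ x : Sph n, f (sphMap (LinearIsometryEquiv.neg ℝ) x) = -f x := by
    intro x
    show ((LinearIsometryEquiv.neg ℝ) (x : EuclideanSpace ℝ (Fin n))) i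
        = -(x : EuclideanSpace ℝ (Fin n)) i
    simp
  rw [funext hneg] at key
  rw [integral_neg] at key
  linarith

lemma half_rpow (θ : ℝ) : ((2:ℝ)⁻¹) ^ (θ - 1) = (2:ℝ) ^ (1 - θ) := by
  rw [Real.inv_rpow (by norm_num), ← Real.rpow_neg (by norm_num)]
  norm_num

end Stmt15Aux

open Stmt15Aux

theorem stmt15 (n : ℕ) (hn : 2 ≤ n)
    (σ : Measure (Sph n)) [IsProbabilityMeasure σ] (hσ : IsRotationInvariant σ)
    (ν : Measure (Sph n)) (hν : IsCubature 1 σ ν)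
    (θ : ℝ) (hθ : θ ∈ Set.Ioo (0 : ℝ) 1) :
    (2 : ℝ) ^ (1 - θ) ≤ thetaNorm ν θ ∧
      (thetaNorm ν θ = (2 : ℝ) ^ (1 - θ) ↔
        ∃ ξ : Sph n, ν = (2 : ℝ≥0∞)⁻¹ • (Measure.dirac ξ + Measure.dirac (antipode ξ))) := by
  classical
  obtain ⟨hθ0, hθ1⟩ := hθ
  -- Backward direction of the iff (no cubature hypothesis needed).
  have backward : ∀ ξ : Sph n,
      thetaNorm ((2 : ℝ≥0∞)⁻¹ • (Measure.dirac ξ + Measure.dirac (antipode ξ))) θ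
        = (2 : ℝ) ^ (1 - θ) := by
    intro ξ
    set η := antipode ξ with hη
    have hne : η ≠ ξ := by
      intro h
      have h1 : (η : EuclideanSpace ℝ (Fin n)) = (ξ : EuclideanSpace ℝ (Fin n)) :=
        congrArg Subtype.val h
      have h2 : -(ξ : EuclideanSpace ℝ (Fin n)) = (ξ : EuclideanSpace ℝ (Fin n)) := h1
      have h3 : (ξ : EuclideanSpace ℝ (Fin n)) = 0 := by
        have hadd : (ξ : EuclideanSpace ℝ (Fin n)) + (ξ : EuclideanSpace ℝ (Fin n)) = 0 := by
          calc (ξ : EuclideanSpace ℝ (Fin n)) + ξ = -(ξ:EuclideanSpace ℝ (Fin n)) + ξ := by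
                rw [h2]
            _ = 0 := neg_add_cancel _
        have h2s : (2:ℝ) • (ξ : EuclideanSpace ℝ (Fin n)) = 0 := by
          rw [two_smul]; exact hadd
        rcases smul_eq_zero.1 h2s with h | h
        · norm_num at h
        · exact h
      have h4 : ‖(ξ : EuclideanSpace ℝ (Fin n))‖ = 1 := mem_sphere_zero_iff_norm.mp ξ.2
      rw [h3] at h4; simp at h4
    set μ := (2 : ℝ≥0∞)⁻¹ • (Measure.dirac ξ + Measure.dirac η) with hμ
    have hμsing : ∀ u : Sph n, μ {u} =
        2⁻¹ * ((if ξ ∈ ({u} : Set (Sph n)) then 1 else 0) +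
          (if η ∈ ({u} : Set (Sph n)) then 1 else 0)) := by
      intro u
      rw [hμ]
      rw [Measure.smul_apply, Measure.add_apply, Measure.dirac_apply' _ (measurableSet_singleton u),
        Measure.dirac_apply' _ (measurableSet_singleton u)]
      simp [Set.indicator_apply]
    have hμξ : μ {ξ} = 2⁻¹ := by rw [hμsing]; simp [hne]
    have hμη : μ {η} = 2⁻¹ := by rw [hμsing]; simp [hne, Ne.symm hne]
    have hzero : ∀ u : Sph n, u ∉ ({ξ, η} : Finset (Sph n)) → (μ {u}).toReal ^ θ = 0 := by
      intro u hu
      simp only [Finset.mem_insert, Finset.mem_singleton] at hu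
      push_neg at hu
      rw [hμsing]
      rw [if_neg (by simp [Ne.symm hu.1]), if_neg (by simp [Ne.symm hu.2])]
      simp [Real.zero_rpow hθ0.ne']
    have hsum : thetaNorm μ θ = ∑ u ∈ ({ξ, η} : Finset (Sph n)), (μ {u}).toReal ^ θ :=
      tsum_eq_sum hzero
    rw [thetaNorm] at *
    rw [hsum, Finset.sum_insert (by simpa using (Ne.symm hne)), Finset.sum_singleton,
      hμξ, hμη]
    have htr : ((2 : ℝ≥0∞)⁻¹).toReal = (2:ℝ)⁻¹ := by simp
    rw [htr]
    have h1 : ((2:ℝ)⁻¹) ^ θ = (2:ℝ) ^ (-θ) := by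
      rw [Real.inv_rpow (by norm_num), ← Real.rpow_neg (by norm_num)]
    have h2 : (2:ℝ) ^ (1 - θ) = 2 * (2:ℝ) ^ (-θ) := by
      rw [show (1 - θ) = 1 + (-θ) by ring, Real.rpow_add (by norm_num), Real.rpow_one]
    rw [h1, h2]; ring
  obtain ⟨hprob, ⟨s, hs⟩, hcub⟩ := hν
  haveI := hprob
  set w : Sph n → ℝ := fun u => (ν {u}).toReal with hwdef
  have hwnn : ∀ u, 0 ≤ w u := fun u => ENNReal.toReal_nonneg
  have hνsum : ν = ∑ u ∈ s, ν {u} • Measure.dirac u := measure_eq_sum ν hs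
  have hfin : ∀ u : Sph n, ν {u} ≠ ∞ := fun u => measure_ne_top ν _
  have hsum1 : ∑ u ∈ s, w u = 1 := by
    have h : (1 : ℝ≥0∞) = ∑ u ∈ s, ν {u} := by
      conv_lhs => rw [← measure_univ (μ := ν)]
      conv_lhs => rw [hνsum]
      simp [Measure.coe_finset_sum, Measure.smul_apply]
    have := ENNReal.toReal_sum (s := s) (f := fun u => ν {u}) (fun u _ => hfin u)
    rw [← h] at this
    simpa [hwdef] using this.symm
  -- barycenter is zero
  have hbar : ∀ i : Fin n, ∑ u ∈ s, w u * (u : EuclideanSpace ℝ (Fin n)) i = 0 := by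
    intro i
    have hdeg : (MvPolynomial.X i : MvPolynomial (Fin n) ℝ).totalDegree ≤ 1 := by
      simp [MvPolynomial.totalDegree_X]
    have h := hcub (MvPolynomial.X i) hdeg
    have hXeval : (fun x : Sph n => polyEval (MvPolynomial.X i) x)
        = fun x : Sph n => (x : EuclideanSpace ℝ (Fin n)) i := by
      funext x; simp [polyEval]
    rw [hXeval] at h
    rw [sigma_coord σ hσ i] at h
    rw [integral_eq_sum ν hs _ (coord_continuous i)] at h
    simpa [hwdef, smul_eq_mul] using h
  have hvec : ∑ u ∈ s, w u • (u : EuclideanSpace ℝ (Fin n)) = 0 := by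
    refine PiLp.ext fun i => ?_
    show EuclideanSpace.proj (𝕜 := ℝ) i
        (∑ u ∈ s, w u • (u : EuclideanSpace ℝ (Fin n))) = EuclideanSpace.proj (𝕜 := ℝ) i 0
    rw [map_sum, map_zero]
    simp only [_root_.map_smul, smul_eq_mul, PiLp.proj_apply]
    simpa using hbar i
  have hhalf : ∀ u₀ ∈ s, w u₀ ≤ 1 / 2 := by
    intro u₀ hu₀
    have h1 : w u₀ • (u₀ : EuclideanSpace ℝ (Fin n))
        = -∑ u ∈ s.erase u₀, w u • (u : EuclideanSpace ℝ (Fin n)) := by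
      have := Finset.add_sum_erase s (fun u => w u • (u : EuclideanSpace ℝ (Fin n))) hu₀
      rw [hvec] at this
      exact eq_neg_of_add_eq_zero_left this
    have h2 : w u₀ = ‖w u₀ • (u₀ : EuclideanSpace ℝ (Fin n))‖ := by
      rw [norm_smul, mem_sphere_zero_iff_norm.mp u₀.2, mul_one, Real.norm_eq_abs,
        abs_of_nonneg (hwnn u₀)]
    have h3 : w u₀ ≤ ∑ u ∈ s.erase u₀, w u := by
      calc w u₀ = ‖∑ u ∈ s.erase u₀, w u • (u : EuclideanSpace ℝ (Fin n))‖ := by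
            rw [h2, h1, norm_neg]
        _ ≤ ∑ u ∈ s.erase u₀, ‖w u • (u : EuclideanSpace ℝ (Fin n))‖ := norm_sum_le _ _
        _ = ∑ u ∈ s.erase u₀, w u := by
            refine Finset.sum_congr rfl fun u hu => ?_
            rw [norm_smul, mem_sphere_zero_iff_norm.mp u.2, mul_one, Real.norm_eq_abs,
              abs_of_nonneg (hwnn u)]
    have h4 : ∑ u ∈ s.erase u₀, w u = 1 - w u₀ := by
      have := Finset.add_sum_erase s w hu₀
      rw [hsum1] at this
      linarith
    rw [h4] at h3
    linarith
  have hterm : ∀ u ∈ s, w u * (2:ℝ) ^ (1 - θ) ≤ w u ^ θ := by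
    intro u hu
    rcases eq_or_lt_of_le (hwnn u) with h0 | hpos
    · rw [← h0, Real.zero_rpow hθ0.ne', zero_mul]
    · have hsplit : w u ^ θ = w u * w u ^ (θ - 1) := by
        rw [show θ = 1 + (θ - 1) by ring, Real.rpow_add hpos, Real.rpow_one]
        ring_nf
      have hmono : ((2:ℝ)⁻¹) ^ (θ - 1) ≤ w u ^ (θ - 1) := by
        apply Real.rpow_le_rpow_of_nonpos hpos
        · have := hhalf u hu; linarith [this]
        · linarith
      rw [half_rpow] at hmono
      rw [hsplit]
      exact mul_le_mul_of_nonneg_left hmono (hwnn u)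
  have hTN : thetaNorm ν θ = ∑ u ∈ s, w u ^ θ := by
    refine tsum_eq_sum fun u hu => ?_
    have : ν {u} = 0 :=
      measure_mono_null (Set.singleton_subset_iff.2 (by simpa using hu)) hs
    simp [hwdef, this, Real.zero_rpow hθ0.ne']
  have hineq : (2:ℝ) ^ (1 - θ) ≤ thetaNorm ν θ := by
    rw [hTN]
    calc (2:ℝ) ^ (1 - θ) = ∑ u ∈ s, w u * (2:ℝ) ^ (1 - θ) := by
          rw [← Finset.sum_mul, hsum1, one_mul]
      _ ≤ ∑ u ∈ s, w u ^ θ := Finset.sum_le_sum hterm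
  refine ⟨hineq, ?_, ?_⟩
  · -- forward direction of equality
    intro heq
    rw [hTN] at heq
    have hsums : ∑ u ∈ s, w u * (2:ℝ) ^ (1 - θ) = ∑ u ∈ s, w u ^ θ := by
      rw [← Finset.sum_mul, hsum1, one_mul, heq]
    have heach : ∀ u ∈ s, w u * (2:ℝ) ^ (1 - θ) = w u ^ θ :=
      (Finset.sum_eq_sum_iff_of_le hterm).1 hsums
    have hθne : θ - 1 ≠ 0 := by linarith
    have hwhalf : ∀ u ∈ s, w u ≠ 0 → w u = 2⁻¹ := by
      intro u hu hne0
      have hpos : 0 < w u := lt_of_le_of_ne (hwnn u) (Ne.symm hne0)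
      have hsplit2 : w u ^ θ = w u * w u ^ (θ - 1) := by
        rw [show θ = 1 + (θ - 1) by ring, Real.rpow_add hpos, Real.rpow_one]
        ring_nf
      have h1 : w u * w u ^ (θ - 1) = w u * (2:ℝ) ^ (1 - θ) := by
        rw [← hsplit2, ← heach u hu]
      have h2 : w u ^ (θ - 1) = (2:ℝ) ^ (1 - θ) := mul_left_cancel₀ hne0 h1
      have h3 : (w u ^ (θ - 1)) ^ (θ - 1)⁻¹ = w u := by
        rw [← Real.rpow_mul (hwnn u), mul_inv_cancel₀ hθne, Real.rpow_one]
      have h4 : (((2:ℝ)⁻¹) ^ (θ - 1)) ^ (θ - 1)⁻¹ = (2:ℝ)⁻¹ := by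
        rw [← Real.rpow_mul (by norm_num), mul_inv_cancel₀ hθne, Real.rpow_one]
      rw [← h3, h2, ← half_rpow θ, h4]
    set T := s.filter (fun u => w u ≠ 0) with hTdef
    have hsumT : ∑ u ∈ T, w u = 1 := by
      rw [hTdef, Finset.sum_filter_of_ne (fun x _ h => h)]; exact hsum1
    have hTmem : ∀ u ∈ T, w u = 2⁻¹ := fun u hu =>
      hwhalf u (Finset.mem_filter.1 hu).1 (Finset.mem_filter.1 hu).2
    have hTsub : T ⊆ s := Finset.filter_subset _ _
    have hcardT : (T.card : ℝ) * 2⁻¹ = 1 := by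
      have := Finset.sum_congr rfl hTmem
      rw [hsumT] at this
      rw [Finset.sum_const, nsmul_eq_mul] at this
      linarith [this]
    have hcard2 : T.card = 2 := by
      have h : (T.card : ℝ) = 2 := by
        field_simp at hcardT
        exact_mod_cast hcardT
      exact_mod_cast h
    obtain ⟨a, b, hab, hTeq⟩ := Finset.card_eq_two.1 hcard2
    have haT : a ∈ T := by rw [hTeq]; simp
    have hbT : b ∈ T := by rw [hTeq]; simp
    have hwa : w a = 2⁻¹ := hTmem a haT
    have hwb : w b = 2⁻¹ := hTmem b hbT
    have hvecT : ∑ u ∈ T, w u • (u : EuclideanSpace ℝ (Fin n)) = 0 := by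
      rw [hTdef, Finset.sum_filter_of_ne, hvec]
      intro x _ hx h0
      exact hx (by rw [h0, zero_smul])
    have hab0 : w a • (a : EuclideanSpace ℝ (Fin n))
        + w b • (b : EuclideanSpace ℝ (Fin n)) = 0 := by
      rw [hTeq, Finset.sum_insert (by simpa using hab), Finset.sum_singleton] at hvecT
      exact hvecT
    have hba : (b : EuclideanSpace ℝ (Fin n)) = -(a : EuclideanSpace ℝ (Fin n)) := by
      rw [hwa, hwb] at hab0
      have hsmul : (2:ℝ)⁻¹ • ((a : EuclideanSpace ℝ (Fin n)) + b) = 0 := by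
        rw [smul_add]; exact hab0
      have hsum0 : (a : EuclideanSpace ℝ (Fin n)) + b = 0 := by
        rcases smul_eq_zero.1 hsmul with h | h
        · norm_num at h
        · exact h
      exact eq_neg_of_add_eq_zero_right hsum0
    have hbanti : b = antipode a := Subtype.ext hba
    refine ⟨a, ?_⟩
    have hwzero : ∀ x ∈ s, ν {x} • Measure.dirac x ≠ 0 → w x ≠ 0 := by
      intro x _ hne0 h0
      apply hne0
      have hx0 : ν {x} = 0 := by
        rcases (ENNReal.toReal_eq_zero_iff _).1 h0 with h | h
        · exact h
        · exact absurd h (hfin x)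
      rw [hx0, zero_smul]
    have hν2 : ν = ∑ u ∈ T, ν {u} • Measure.dirac u := by
      rw [hTdef, Finset.sum_filter_of_ne hwzero]
      exact hνsum
    have hνa : ν {a} = 2⁻¹ := by
      refine (ENNReal.toReal_eq_toReal_iff' (hfin a) (by norm_num)).1 ?_
      rw [show (ν {a}).toReal = w a from rfl, hwa]
      simp
    have hνb : ν {b} = 2⁻¹ := by
      refine (ENNReal.toReal_eq_toReal_iff' (hfin b) (by norm_num)).1 ?_
      rw [show (ν {b}).toReal = w b from rfl, hwb]
      simp
    rw [hν2, hTeq, Finset.sum_insert (by simpa using hab), Finset.sum_singleton,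
      hνa, hνb, hbanti, smul_add]
  · rintro ⟨ξ, rfl⟩
    exact backward ξ
end
end

section
/- Let n ≥ 2 and t ≥ 1 be integers. Then every cubature formula of strength 2t on S^{n-1} is supported on at least C(n+t-1, n-1) + C(n+t-2, n-1) points, and every cubature formula of strength 2t+1 on S^{n-1} is supported on at least 2·C(n+t-1, n-1) points, where C(a,b) denotes the binomial coefficient. -/
open MeasureTheory Metric
open scoped ENNReal

noncomputable section

namespace Stmt16Aux

open MvPolynomial Module

variable {n : ℕ}

lemma continuous_polyEval (p : MvPolynomial (Fin n) ℝ) : Continuous (polyEval p) := by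
  have h1 : Continuous fun v : Fin n → ℝ => MvPolynomial.eval v p := by continuity
  exact h1.comp (continuous_pi fun i => (PiLp.continuous_apply 2 _ i).comp continuous_subtype_val)

lemma integrable_polyEval (p : MvPolynomial (Fin n) ℝ) (μ : Measure (Sph n))
    [IsFiniteMeasure μ] : Integrable (polyEval p) μ :=
  (continuous_polyEval p).integrable_of_hasCompactSupport (HasCompactSupport.of_compactSpace _)

lemma polyEval_mul (p q : MvPolynomial (Fin n) ℝ) (x : Sph n) :
    polyEval (p * q) x = polyEval p x * polyEval q x := by simp [polyEval]

/-- transitivity of the isometry group on the sphere -/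
lemma sphere_transitive (hn : 1 ≤ n) (x y : Sph n) :
    ∃ U : EuclideanSpace ℝ (Fin n) ≃ₗᵢ[ℝ] EuclideanSpace ℝ (Fin n), sphMap U x = y := by
  have hcard : finrank ℝ (EuclideanSpace ℝ (Fin n)) = Fintype.card (Fin n) := by
    simp [finrank_euclideanSpace]
  let i₀ : Fin n := ⟨0, hn⟩
  have key : ∀ z : EuclideanSpace ℝ (Fin n), ‖z‖ = 1 →
      ∃ b : OrthonormalBasis (Fin n) ℝ (EuclideanSpace ℝ (Fin n)), b i₀ = z := by
    intro z hz
    have ho : Orthonormal ℝ (Set.restrict {i₀} (fun _ : Fin n => z)) := by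
      constructor
      · intro i
        simp [Set.restrict, real_inner_self_eq_norm_sq, hz]
      · intro i j hij
        exact absurd (Subtype.ext ((i.2 : (i : Fin n) ∈ ({i₀} : Set (Fin n))).trans
          ((j.2 : (j : Fin n) ∈ ({i₀} : Set (Fin n)))).symm)) hij
    obtain ⟨b, hb⟩ := ho.exists_orthonormalBasis_extension_of_card_eq hcard
    exact ⟨b, hb i₀ rfl⟩
  obtain ⟨b, hb⟩ := key x (mem_sphere_zero_iff_norm.mp x.2)
  obtain ⟨c, hc⟩ := key y (mem_sphere_zero_iff_norm.mp y.2)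
  refine ⟨b.repr.trans c.repr.symm, ?_⟩
  apply Subtype.ext
  show (b.repr.trans c.repr.symm) (x : EuclideanSpace ℝ (Fin n)) = y
  simp only [LinearIsometryEquiv.trans_apply]
  rw [← hb, b.repr_self]
  simp [← hc]

/-- `sphMap U` as a homeomorphism. -/
def sphHomeo (U : EuclideanSpace ℝ (Fin n) ≃ₗᵢ[ℝ] EuclideanSpace ℝ (Fin n)) :
    Sph n ≃ₜ Sph n where
  toFun := sphMap U
  invFun := sphMap U.symm
  left_inv x := Subtype.ext (by simp [sphMap])
  right_inv x := Subtype.ext (by simp [sphMap])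
  continuous_toFun := sphMap_continuous U
  continuous_invFun := sphMap_continuous U.symm

/-- A continuous nonnegative function with zero integral against a rotation-invariant
probability measure vanishes identically. -/
lemma eq_zero_of_integral_eq_zero (hn : 1 ≤ n) (σ : Measure (Sph n)) [IsProbabilityMeasure σ]
    (hσ : IsRotationInvariant σ) (f : Sph n → ℝ) (hf : Continuous f) (h0 : ∀ x, 0 ≤ f x)
    (hint : ∫ x, f x ∂σ = 0) : ∀ x, f x = 0 := by
  by_contra hc
  push_neg at hc
  obtain ⟨x₀, hx₀⟩ := hc
  have hx₀' : 0 < f x₀ := lt_of_le_of_ne (h0 x₀) (Ne.symm hx₀)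
  have hae : f =ᵐ[σ] 0 := by
    refine (integral_eq_zero_iff_of_nonneg h0 ?_).mp hint
    exact hf.integrable_of_hasCompactSupport (HasCompactSupport.of_compactSpace _)
  have hnull : σ {x | ¬ f x = 0} = 0 := hae
  set Uo : Set (Sph n) := f ⁻¹' (Set.Ioi 0) with hUo
  have hUo_open : IsOpen Uo := isOpen_Ioi.preimage hf
  have hUo_null : σ Uo = 0 :=
    measure_mono_null (fun x hx => ne_of_gt (hx : (0:ℝ) < f x)) hnull
  choose Ug hUg using fun y => sphere_transitive hn x₀ y
  set V : Sph n → Set (Sph n) := fun y => sphMap (Ug y) '' Uo with hV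
  have hVopen : ∀ y, IsOpen (V y) := fun y =>
    (sphHomeo (Ug y)).isOpenMap _ hUo_open
  have hVmem : ∀ y, y ∈ V y := fun y => ⟨x₀, hx₀', hUg y⟩
  have hVnull : ∀ y, σ (V y) = 0 := by
    intro y
    have hmeas : Measurable (sphMap (Ug y)) := (sphMap_continuous _).measurable
    have h1 : σ (V y) = σ (sphMap (Ug y) ⁻¹' (V y)) := by
      conv_lhs => rw [← hσ (Ug y)]
      exact Measure.map_apply hmeas (hVopen y).measurableSet
    have h2 : sphMap (Ug y) ⁻¹' V y = Uo := by
      simp only [hV]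
      exact Set.preimage_image_eq Uo (sphHomeo (Ug y)).injective
    rw [h1, h2]
    exact hUo_null
  obtain ⟨s, hs⟩ := isCompact_univ.elim_finite_subcover V hVopen
    (fun y _ => Set.mem_iUnion.mpr ⟨y, hVmem y⟩)
  have hle : σ Set.univ ≤ ∑ y ∈ s, σ (V y) :=
    (measure_mono hs).trans (measure_biUnion_finset_le s V)
  simp [hVnull, measure_univ] at hle

lemma eval_smul_of_isHomogeneous {p : MvPolynomial (Fin n) ℝ} {m : ℕ}
    (hp : p.IsHomogeneous m) (c : ℝ) (v : Fin n → ℝ) :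
    MvPolynomial.eval (c • v) p = c ^ m * MvPolynomial.eval v p := by
  rw [MvPolynomial.eval_eq, MvPolynomial.eval_eq, Finset.mul_sum]
  apply Finset.sum_congr rfl
  intro d hd
  have hdeg : ∑ i ∈ d.support, d i = m := by
    have h := hp (MvPolynomial.mem_support_iff.mp hd)
    rw [← h]
    simp [Finsupp.weight_apply, Finsupp.sum]
  have hprod : ∏ i ∈ d.support, (c • v) i ^ d i
      = c ^ m * ∏ i ∈ d.support, v i ^ d i := by
    have : ∀ i ∈ d.support, (c • v) i ^ d i = c ^ d i * v i ^ d i := by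
      intro i _
      simp [mul_pow]
    rw [Finset.prod_congr rfl this, Finset.prod_mul_distrib,
      Finset.prod_pow_eq_pow_sum, hdeg]
  rw [hprod]
  ring

lemma homog_eq_zero (hn : 1 ≤ n) {p : MvPolynomial (Fin n) ℝ} {k : ℕ}
    (hp : p.IsHomogeneous k) (hv : ∀ x : Sph n, polyEval p x = 0) : p = 0 := by
  have hSnon : Nonempty (Sph n) := by
    refine ⟨⟨EuclideanSpace.single ⟨0, hn⟩ (1:ℝ), ?_⟩⟩
    simp [mem_sphere_zero_iff_norm, EuclideanSpace.norm_single]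
  apply MvPolynomial.funext
  intro v
  rw [map_zero]
  by_cases hk : k = 0
  · obtain ⟨x⟩ := hSnon
    have key : ∀ u : Fin n → ℝ, MvPolynomial.eval u p = MvPolynomial.eval (fun _ => (0:ℝ)) p := by
      intro u
      have h := eval_smul_of_isHomogeneous hp (0:ℝ) u
      rw [hk, pow_zero, one_mul] at h
      rw [← h]
      have : (0 : ℝ) • u = (fun _ => (0:ℝ)) := by funext i; simp
      rw [this]
    have hx0 := hv x
    rw [polyEval] at hx0
    rw [key v, ← key (fun i => (x : EuclideanSpace ℝ (Fin n)) i), hx0]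
  · have hcc : constantCoeff p = 0 := by
      have : (0 : Fin n →₀ ℕ).degree ≠ k := by simpa using Ne.symm hk
      simpa [MvPolynomial.constantCoeff_eq] using hp.coeff_eq_zero this
    by_cases hv0 : v = 0
    · subst hv0
      have h0' : MvPolynomial.eval (fun _ => (0:ℝ) : Fin n → ℝ) p = constantCoeff p :=
        DFunLike.congr_fun MvPolynomial.eval_zero' p
      calc MvPolynomial.eval (0 : Fin n → ℝ) p
          = MvPolynomial.eval (fun _ => (0:ℝ) : Fin n → ℝ) p := rfl
        _ = constantCoeff p := h0'
        _ = 0 := hcc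
    · -- rescale to the sphere
      set w : EuclideanSpace ℝ (Fin n) := (WithLp.equiv 2 (Fin n → ℝ)).symm v with hw
      have hwne : ‖w‖ ≠ 0 := by
        simp only [norm_ne_zero_iff]
        intro h
        apply hv0
        have := congrArg (WithLp.equiv 2 (Fin n → ℝ)) h
        simpa [hw] using this
      set x : EuclideanSpace ℝ (Fin n) := ‖w‖⁻¹ • w with hx
      have hxnorm : ‖x‖ = 1 := by
        rw [hx, norm_smul]
        simp [abs_of_nonneg (norm_nonneg w), inv_mul_cancel₀ hwne]
      have hvx : v = ‖w‖ • (fun i => x i) := by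
        funext i
        rw [hx]
        show v i = ‖w‖ * (‖w‖⁻¹ • w) i
        have : (‖w‖⁻¹ • w) i = ‖w‖⁻¹ * w i := rfl
        rw [this]
        have hwv : w i = v i := rfl
        rw [hwv]
        field_simp
      have := hv ⟨x, mem_sphere_zero_iff_norm.mpr hxnorm⟩
      rw [hvx, eval_smul_of_isHomogeneous hp]
      simp only [polyEval] at this
      rw [this, mul_zero]

lemma odd_integral (σ : Measure (Sph n)) [IsProbabilityMeasure σ]
    (hσ : IsRotationInvariant σ) {p : MvPolynomial (Fin n) ℝ} {k : ℕ}
    (hp : p.IsHomogeneous k) (hk : Odd k) : ∫ x, polyEval p x ∂σ = 0 := by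
  set U : EuclideanSpace ℝ (Fin n) ≃ₗᵢ[ℝ] EuclideanSpace ℝ (Fin n) :=
    LinearIsometryEquiv.neg ℝ with hU
  have hmeas : Measurable (sphMap U) := (sphMap_continuous U).measurable
  have h1 : ∫ x, polyEval p x ∂σ = ∫ x, polyEval p (sphMap U x) ∂σ := by
    conv_lhs => rw [← hσ U]
    exact integral_map hmeas.aemeasurable (continuous_polyEval p).aestronglyMeasurable
  have h2 : ∀ x : Sph n, polyEval p (sphMap U x) = - polyEval p x := by
    intro x
    have hcoord : (fun i => ((sphMap U x : Sph n) : EuclideanSpace ℝ (Fin n)) i)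
        = (-1 : ℝ) • (fun i => (x : EuclideanSpace ℝ (Fin n)) i) := by
      funext i
      show (U (x : EuclideanSpace ℝ (Fin n))) i = (-1 : ℝ) * (x : EuclideanSpace ℝ (Fin n)) i
      rw [hU]
      show (-(x : EuclideanSpace ℝ (Fin n))) i = (-1 : ℝ) * (x : EuclideanSpace ℝ (Fin n)) i
      simp
    rw [polyEval, hcoord, eval_smul_of_isHomogeneous hp, hk.neg_one_pow]
    simp [polyEval]
  rw [funext h2] at h1
  simp only [integral_neg] at h1
  linarith

end Stmt16Aux

namespace Stmt16Aux

open MvPolynomial Module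

variable {n : ℕ}

def degEquiv (n k : ℕ) : {d : Fin n →₀ ℕ // d.degree = k} ≃ Sym (Fin n) k where
  toFun d := ⟨Finsupp.toMultiset d.1, by
    rw [Finsupp.card_toMultiset]
    have h : ((d : Fin n →₀ ℕ).sum fun _ => id) = (d : Fin n →₀ ℕ).degree := rfl
    rw [h, d.2]⟩
  invFun m := ⟨Multiset.toFinsupp m.1, by
    have h := Finsupp.card_toMultiset (Multiset.toFinsupp m.1)
    rw [Multiset.toFinsupp_toMultiset] at h
    have h2 : (Multiset.toFinsupp m.1).degree = Multiset.card m.1 := h.symm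
    rw [h2]; exact m.2⟩
  left_inv d := by ext : 1; simp
  right_inv m := by ext : 1; simp

instance instFdeg (n k : ℕ) : Fintype {d : Fin n →₀ ℕ // d.degree = k} :=
  Fintype.ofEquiv _ (degEquiv n k).symm

instance instFdeg' (n k : ℕ) : Fintype ↑{d : Fin n →₀ ℕ | d.degree = k} := instFdeg n k

lemma finrank_homog (n k : ℕ) :
    finrank ℝ (homogeneousSubmodule (Fin n) ℝ k) = (n + k - 1).choose k := by
  rw [MvPolynomial.homogeneousSubmodule_eq_finsupp_supported]
  have hb : Basis {d : Fin n →₀ ℕ | d.degree = k} ℝ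
      (AddMonoidAlgebra.supported ℝ ℝ {d : Fin n →₀ ℕ | d.degree = k}) :=
    MvPolynomial.basisRestrictSupport ℝ _
  refine (finrank_eq_card_basis hb).trans ?_
  have h2 : Fintype.card ↑{d : Fin n →₀ ℕ | d.degree = k} = Fintype.card (Sym (Fin n) k) :=
    Fintype.card_congr (degEquiv n k)
  rw [h2, Sym.card_sym_eq_choose]
  simp

set_option synthInstance.maxHeartbeats 400000 in
instance instFDhomog (k : ℕ) : FiniteDimensional ℝ (homogeneousSubmodule (Fin n) ℝ k) := by
  haveI hfd : Module.Finite ℝ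
      (MvPolynomial.restrictSupport ℝ {d : Fin n →₀ ℕ | d.degree = k}) :=
    Module.Finite.of_basis (MvPolynomial.basisRestrictSupport ℝ _)
  have heq : homogeneousSubmodule (Fin n) ℝ k
      = MvPolynomial.restrictSupport ℝ {d : Fin n →₀ ℕ | d.degree = k} :=
    MvPolynomial.homogeneousSubmodule_eq_finsupp_supported (Fin n) ℝ k
  exact Module.Finite.equiv (LinearEquiv.ofEq _ _ heq).symm

/-- Choice of a vector not orthogonal to any point of a finite subset of the sphere. -/
lemma exists_xi (X : Finset (Sph n)) :
    ∃ ξ : Fin n → ℝ, ∀ x ∈ X, (∑ i, ξ i * (x : EuclideanSpace ℝ (Fin n)) i) ≠ 0 := by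
  classical
  induction X using Finset.induction_on with
  | empty => exact ⟨0, by simp⟩
  | @insert a s ha ih =>
    obtain ⟨ξ, hξ⟩ := ih
    have hga : (∑ i, (a : EuclideanSpace ℝ (Fin n)) i * (a : EuclideanSpace ℝ (Fin n)) i) = 1 := by
      have hnorm : ‖(a : EuclideanSpace ℝ (Fin n))‖ = 1 := mem_sphere_zero_iff_norm.mp a.2
      have h := EuclideanSpace.norm_eq (a : EuclideanSpace ℝ (Fin n))
      rw [hnorm] at h
      have h2 : (∑ i, ‖(a : EuclideanSpace ℝ (Fin n)) i‖ ^ 2) = 1 := by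
        have := congrArg (fun r : ℝ => r ^ 2) h
        simpa [Real.sq_sqrt (Finset.sum_nonneg (fun i _ => sq_nonneg _))] using this.symm
      calc (∑ i, (a : EuclideanSpace ℝ (Fin n)) i * (a : EuclideanSpace ℝ (Fin n)) i)
          = ∑ i, ‖(a : EuclideanSpace ℝ (Fin n)) i‖ ^ 2 := by
            apply Finset.sum_congr rfl; intro i _
            simp [Real.norm_eq_abs, sq_abs, sq]
        _ = 1 := h2
    set g : Sph n → ℝ := fun x => ∑ i, (a : EuclideanSpace ℝ (Fin n)) i
        * (x : EuclideanSpace ℝ (Fin n)) i with hg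
    set bad : Finset ℝ := (insert a s).image
        (fun x => if g x = 0 then 0 else
          - (∑ i, ξ i * (x : EuclideanSpace ℝ (Fin n)) i) / g x) with hbad
    obtain ⟨c, hc⟩ := Infinite.exists_notMem_finset (insert (0:ℝ) bad)
    have hc0 : c ≠ 0 := fun h => hc (by simp [h])
    have hcb : c ∉ bad := fun h => hc (Finset.mem_insert_of_mem h)
    refine ⟨ξ + c • (fun i => (a : EuclideanSpace ℝ (Fin n)) i), ?_⟩
    intro x hx
    have hsum : (∑ i, (ξ + c • (fun i => (a : EuclideanSpace ℝ (Fin n)) i)) i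
        * (x : EuclideanSpace ℝ (Fin n)) i)
        = (∑ i, ξ i * (x : EuclideanSpace ℝ (Fin n)) i) + c * g x := by
      rw [hg, Finset.mul_sum, ← Finset.sum_add_distrib]
      apply Finset.sum_congr rfl
      intro i _
      simp only [Pi.add_apply, Pi.smul_apply, smul_eq_mul]
      ring
    rw [hsum]
    by_cases hgx : g x = 0
    · have hxs : x ∈ s := by
        rcases Finset.mem_insert.mp hx with h | h
        · exfalso
          apply one_ne_zero (α := ℝ)
          rw [← hga, ← hgx, h]
        · exact h
      rw [hgx, mul_zero, add_zero]
      exact hξ x hxs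
    · intro hzero
      apply hcb
      rw [hbad]
      apply Finset.mem_image.mpr
      refine ⟨x, hx, ?_⟩
      rw [if_neg hgx]
      field_simp
      linarith [hzero]

end Stmt16Aux

namespace Stmt16Aux

open MvPolynomial Module

variable {n : ℕ}

lemma nu_compl_null (ν : Measure (Sph n)) (hfin : IsFinSupported ν) :
    ν ({u : Sph n | ν {u} ≠ 0}ᶜ) = 0 := by
  obtain ⟨s, hs⟩ := hfin
  have h1 : ({u : Sph n | ν {u} ≠ 0}ᶜ : Set (Sph n))
      ⊆ (↑s : Set (Sph n))ᶜ ∪ ((↑s : Set (Sph n)) ∩ {u | ν {u} = 0}) := by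
    intro u hu
    by_cases h : u ∈ s
    · right; exact ⟨h, not_not.mp hu⟩
    · left; exact h
  apply measure_mono_null h1
  apply measure_union_null hs
  rw [← Set.biUnion_of_singleton ((↑s : Set (Sph n)) ∩ {u | ν {u} = 0})]
  refine (measure_biUnion_null_iff ((s.countable_toSet).mono Set.inter_subset_left)).mpr ?_
  intro u hu
  exact hu.2

lemma support_finite (ν : Measure (Sph n)) (hfin : IsFinSupported ν) :
    {u : Sph n | ν {u} ≠ 0}.Finite := by
  obtain ⟨s, hs⟩ := hfin
  apply Set.Finite.subset s.finite_toSet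
  intro u hu
  by_contra hus
  exact hu (measure_mono_null (by simpa using hus) hs)

/-- The key analytic step: if two polynomials agree on the support of a cubature formula `ν`,
their "cross term" has odd symmetry under σ, and degrees are all right, then `p` vanishes
on the whole sphere. -/
lemma core (hn : 2 ≤ n) (τ : ℕ) (σ ν : Measure (Sph n)) [IsProbabilityMeasure σ]
    (hσ : IsRotationInvariant σ) (hcub : IsCubature τ σ ν)
    (p q : MvPolynomial (Fin n) ℝ)
    (hdeg1 : (p * p).totalDegree ≤ τ) (hdeg2 : (p * q).totalDegree ≤ τ)
    (hodd : ∫ x, polyEval (p * q) x ∂σ = 0)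
    (heq : ∀ u : Sph n, ν {u} ≠ 0 → polyEval p u = polyEval q u) :
    ∀ x : Sph n, polyEval p x = 0 := by
  obtain ⟨hprob, hfin, hint⟩ := hcub
  haveI := hprob
  have hXnull := nu_compl_null ν hfin
  have hae : (fun u => polyEval (p * p) u - polyEval (p * q) u) =ᵐ[ν] 0 := by
    refine measure_mono_null ?_ hXnull
    intro u hu
    simp only [Set.mem_setOf_eq, Set.mem_compl_iff] at hu ⊢
    intro hνu
    apply hu
    show polyEval (p*p) u - polyEval (p*q) u = 0
    rw [polyEval_mul, polyEval_mul, heq u hνu]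
    ring
  have h0 : ∫ u, (polyEval (p * p) u - polyEval (p * q) u) ∂ν = 0 :=
    integral_eq_zero_of_ae hae
  have hsub : ∫ u, polyEval (p * p) u ∂ν - ∫ u, polyEval (p * q) u ∂ν = 0 := by
    rw [← integral_sub (integrable_polyEval _ ν) (integrable_polyEval _ ν)]
    exact h0
  have hpp : ∫ u, polyEval (p * p) u ∂σ = 0 := by
    have e1 := hint (p * p) hdeg1
    have e2 := hint (p * q) hdeg2
    rw [e1, e2, hodd] at hsub
    linarith
  have hzero := eq_zero_of_integral_eq_zero (by omega) σ hσ (polyEval (p * p))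
    (continuous_polyEval _) (fun x => by rw [polyEval_mul]; exact mul_self_nonneg _) hpp
  intro x
  have hx := hzero x
  rw [polyEval_mul] at hx
  exact mul_self_eq_zero.mp hx

/-- Evaluation on the support of `ν`, as a linear map. -/
def evalMap (ν : Measure (Sph n)) :
    MvPolynomial (Fin n) ℝ →ₗ[ℝ] ({u : Sph n | ν {u} ≠ 0} → ℝ) where
  toFun p := fun u => polyEval p u
  map_add' p q := by funext u; simp [polyEval]
  map_smul' c p := by funext u; simp [polyEval]

lemma finrank_map_of_inj {M N : Type*} [AddCommGroup M] [Module ℝ M] [AddCommGroup N]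
    [Module ℝ N] (f : M →ₗ[ℝ] N) (W : Submodule ℝ M) [FiniteDimensional ℝ W]
    (hinj : ∀ p ∈ W, f p = 0 → p = 0) :
    finrank ℝ (W.map f) = finrank ℝ W := by
  have h1 : Function.Injective (f.domRestrict W) := by
    rw [← LinearMap.ker_eq_bot]
    apply (Submodule.eq_bot_iff _).mpr
    intro x hx
    exact Subtype.ext (hinj x.1 x.2 hx)
  rw [← LinearMap.range_domRestrict]
  exact LinearMap.finrank_range_of_inj h1

end Stmt16Aux

namespace Stmt16Aux

open MvPolynomial Module

variable {n : ℕ}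

lemma count_le (ν : Measure (Sph n)) (hfin : IsFinSupported ν)
    (W₁ W₂ : Submodule ℝ (MvPolynomial (Fin n) ℝ))
    [FiniteDimensional ℝ W₁] [FiniteDimensional ℝ W₂]
    (f₁ f₂ : MvPolynomial (Fin n) ℝ →ₗ[ℝ] ({u : Sph n | ν {u} ≠ 0} → ℝ))
    (hinj₁ : ∀ p ∈ W₁, f₁ p = 0 → p = 0)
    (hinj₂ : ∀ p ∈ W₂, f₂ p = 0 → p = 0)
    (hdisj : (W₁.map f₁) ⊓ (W₂.map f₂) = ⊥) :
    finrank ℝ W₁ + finrank ℝ W₂ ≤ {u : Sph n | ν {u} ≠ 0}.ncard := by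
  haveI : Fintype ({u : Sph n | ν {u} ≠ 0}) := (support_finite ν hfin).fintype
  haveI : FiniteDimensional ℝ (({u : Sph n | ν {u} ≠ 0}) → ℝ) := inferInstance
  have h1 : finrank ℝ (W₁.map f₁) = finrank ℝ W₁ := finrank_map_of_inj f₁ W₁ hinj₁
  have h2 : finrank ℝ (W₂.map f₂) = finrank ℝ W₂ := finrank_map_of_inj f₂ W₂ hinj₂
  have h3 := Submodule.finrank_sup_add_finrank_inf_eq (W₁.map f₁) (W₂.map f₂)
  rw [hdisj, finrank_bot, add_zero, h1, h2] at h3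
  have h4 : finrank ℝ ((W₁.map f₁) ⊔ (W₂.map f₂) : Submodule ℝ _)
      ≤ finrank ℝ (({u : Sph n | ν {u} ≠ 0}) → ℝ) := Submodule.finrank_le _
  rw [Module.finrank_pi] at h4
  have h5 : {u : Sph n | ν {u} ≠ 0}.ncard = Fintype.card ({u : Sph n | ν {u} ≠ 0}) := by
    rw [← Nat.card_coe_set_eq, Nat.card_eq_fintype_card]
  omega

end Stmt16Aux

namespace Stmt16Aux

open MvPolynomial Module

variable {n : ℕ}

lemma kill (hn : 2 ≤ n) (τ k : ℕ) (hk : 2 * k ≤ τ) (σ ν : Measure (Sph n))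
    [IsProbabilityMeasure σ] (hσ : IsRotationInvariant σ) (hcub : IsCubature τ σ ν)
    (p : MvPolynomial (Fin n) ℝ) (hp : p.IsHomogeneous k)
    (hvan : ∀ u : Sph n, ν {u} ≠ 0 → polyEval p u = 0) : p = 0 := by
  apply homog_eq_zero (by omega : 1 ≤ n) hp
  apply core hn τ σ ν hσ hcub p 0
  · calc (p * p).totalDegree ≤ p.totalDegree + p.totalDegree := totalDegree_mul p p
      _ ≤ k + k := add_le_add hp.totalDegree_le hp.totalDegree_le
      _ ≤ τ := by omega
  · rw [mul_zero]; simp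
  · rw [mul_zero]; simp [polyEval]
  · intro u hu
    have h0 : polyEval (0 : MvPolynomial (Fin n) ℝ) u = 0 := by simp [polyEval]
    rw [h0]
    exact hvan u hu

end Stmt16Aux

open Stmt16Aux MvPolynomial Module in
theorem stmt16 (n t : ℕ) (hn : 2 ≤ n) (ht : 1 ≤ t)
    (σ : Measure (Sph n)) [IsProbabilityMeasure σ] (hσ : IsRotationInvariant σ) :
    (∀ ν : Measure (Sph n), IsCubature (2 * t) σ ν →
      (n + t - 1).choose (n - 1) + (n + t - 2).choose (n - 1) ≤
        {u : Sph n | ν {u} ≠ 0}.ncard) ∧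
    (∀ ν : Measure (Sph n), IsCubature (2 * t + 1) σ ν →
      2 * (n + t - 1).choose (n - 1) ≤ {u : Sph n | ν {u} ≠ 0}.ncard) := by
  classical
  have e1 : (n + t - 1).choose (n - 1) = (n + t - 1).choose t := by
    rw [← Nat.choose_symm (show t ≤ n + t - 1 by omega)]
    congr 1; omega
  constructor
  · -- even case
    intro ν hcub
    have hfin := hcub.2.1
    -- injectivity
    have hinj : ∀ (k : ℕ), 2 * k ≤ 2 * t → ∀ p ∈ homogeneousSubmodule (Fin n) ℝ k,
        evalMap ν p = 0 → p = 0 := by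
      intro k hk p hp hp0
      refine kill hn (2*t) k hk σ ν hσ hcub p hp ?_
      intro u hu
      exact congrFun hp0 ⟨u, hu⟩
    have hdisj : ((homogeneousSubmodule (Fin n) ℝ t).map (evalMap ν))
        ⊓ ((homogeneousSubmodule (Fin n) ℝ (t-1)).map (evalMap ν)) = ⊥ := by
      rw [Submodule.eq_bot_iff]
      rintro v ⟨hv1, hv2⟩
      obtain ⟨p, hp, hpv⟩ := hv1
      obtain ⟨q, hq, hqv⟩ := hv2
      have hph : p.IsHomogeneous t := hp
      have hqh : q.IsHomogeneous (t-1) := hq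
      have hres : ∀ x : Sph n, polyEval p x = 0 := by
        apply core hn (2*t) σ ν hσ hcub p q
        · calc (p * p).totalDegree ≤ p.totalDegree + p.totalDegree := totalDegree_mul p p
            _ ≤ t + t := add_le_add hph.totalDegree_le hph.totalDegree_le
            _ ≤ 2*t := by omega
        · calc (p * q).totalDegree ≤ p.totalDegree + q.totalDegree := totalDegree_mul p q
            _ ≤ t + (t-1) := add_le_add hph.totalDegree_le hqh.totalDegree_le
            _ ≤ 2*t := by omega
        · exact odd_integral σ hσ (hph.mul hqh) ⟨t-1, by omega⟩
        · intro u hu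
          exact congrFun (hpv.trans hqv.symm) ⟨u, hu⟩
      rw [← hpv]
      funext u
      exact hres u.1
    have hcount := count_le ν hfin (homogeneousSubmodule (Fin n) ℝ t)
      (homogeneousSubmodule (Fin n) ℝ (t-1)) (evalMap ν) (evalMap ν)
      (hinj t (by omega)) (hinj (t-1) (by omega)) hdisj
    rw [finrank_homog, finrank_homog] at hcount
    have e2 : (n + t - 2).choose (n - 1) = (n + (t-1) - 1).choose (t-1) := by
      rw [← Nat.choose_symm (show t - 1 ≤ n + (t-1) - 1 by omega)]
      congr 1 <;> omega
    rw [e1, e2]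
    exact hcount
  · -- odd case
    intro ν hcub
    have hfin := hcub.2.1
    obtain ⟨ξ, hξ⟩ := exists_xi (support_finite ν hfin).toFinset
    set ℓ : MvPolynomial (Fin n) ℝ := ∑ i, MvPolynomial.C (ξ i) * MvPolynomial.X i with hℓdef
    have hℓ : ℓ.IsHomogeneous 1 := by
      have : ℓ ∈ homogeneousSubmodule (Fin n) ℝ 1 := by
        apply Submodule.sum_mem
        intro i _
        rw [MvPolynomial.C_mul']
        exact Submodule.smul_mem _ _ ((mem_homogeneousSubmodule 1 (X i)).mpr
          (isHomogeneous_X ℝ i))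
      exact this
    have hℓeval : ∀ x : Sph n, polyEval ℓ x
        = ∑ i, ξ i * (x : EuclideanSpace ℝ (Fin n)) i := by
      intro x
      simp [polyEval, hℓdef]
    have hℓne : ∀ u : Sph n, ν {u} ≠ 0 → polyEval ℓ u ≠ 0 := by
      intro u hu
      rw [hℓeval]
      exact hξ u ((support_finite ν hfin).mem_toFinset.mpr hu)
    set g : MvPolynomial (Fin n) ℝ →ₗ[ℝ] ({u : Sph n | ν {u} ≠ 0} → ℝ) :=
      (evalMap ν).comp (LinearMap.mulLeft ℝ ℓ) with hgdef
    have hgapp : ∀ q : MvPolynomial (Fin n) ℝ, g q = evalMap ν (ℓ * q) := fun q => rfl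
    -- injectivity of the two maps
    have hinj₁ : ∀ p ∈ homogeneousSubmodule (Fin n) ℝ t, evalMap ν p = 0 → p = 0 := by
      intro p hp hp0
      refine kill hn (2*t+1) t (by omega) σ ν hσ hcub p hp ?_
      intro u hu
      exact congrFun hp0 ⟨u, hu⟩
    have hinj₂ : ∀ q ∈ homogeneousSubmodule (Fin n) ℝ t, g q = 0 → q = 0 := by
      intro q hq hq0
      refine kill hn (2*t+1) t (by omega) σ ν hσ hcub q hq ?_
      intro u hu
      have h := congrFun hq0 ⟨u, hu⟩
      have h' : polyEval ℓ u * polyEval q u = 0 := by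
        rw [← polyEval_mul]
        exact h
      exact (mul_eq_zero.mp h').resolve_left (hℓne u hu)
    have hdisj : ((homogeneousSubmodule (Fin n) ℝ t).map (evalMap ν))
        ⊓ ((homogeneousSubmodule (Fin n) ℝ t).map g) = ⊥ := by
      rw [Submodule.eq_bot_iff]
      rintro v ⟨hv1, hv2⟩
      obtain ⟨p, hp, hpv⟩ := hv1
      obtain ⟨q, hq, hqv⟩ := hv2
      have hph : p.IsHomogeneous t := hp
      have hqh : q.IsHomogeneous t := hq
      have hres : ∀ x : Sph n, polyEval p x = 0 := by
        apply core hn (2*t+1) σ ν hσ hcub p (ℓ * q)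
        · calc (p * p).totalDegree ≤ p.totalDegree + p.totalDegree := totalDegree_mul p p
            _ ≤ t + t := add_le_add hph.totalDegree_le hph.totalDegree_le
            _ ≤ 2*t+1 := by omega
        · calc (p * (ℓ * q)).totalDegree
              ≤ p.totalDegree + (ℓ * q).totalDegree := totalDegree_mul p (ℓ * q)
            _ ≤ t + (ℓ.totalDegree + q.totalDegree) :=
                add_le_add hph.totalDegree_le (totalDegree_mul ℓ q)
            _ ≤ t + (1 + t) := by
                have := add_le_add hℓ.totalDegree_le hqh.totalDegree_le
                omega
            _ ≤ 2*t+1 := by omega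
        · exact odd_integral σ hσ (hph.mul (hℓ.mul hqh)) ⟨t, by omega⟩
        · intro u hu
          have := congrFun (hpv.trans hqv.symm) ⟨u, hu⟩
          rw [hgapp q] at hqv
          exact congrFun (hpv.trans hqv.symm) ⟨u, hu⟩
      rw [← hpv]
      funext u
      exact hres u.1
    have hcount := count_le ν hfin (homogeneousSubmodule (Fin n) ℝ t)
      (homogeneousSubmodule (Fin n) ℝ t) (evalMap ν) g hinj₁ hinj₂ hdisj
    rw [finrank_homog] at hcount
    rw [e1, two_mul]
    exact hcount
end
end
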